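/- Let G be a prime comparability graph with a source vertex x (a vertex all of whose incident edges are directed away from it in some fixed transitive orientation). Then the ordered partition ({x}, V(G) \ {x}) is consistent with a linear extension, and if an ordered partition P consistent with a linear extension is refined by a pivot operation on a vertex p (splitting each class Q not containing p into Q \ N(p) followed by Q ∩ N(p) if Q is after p's class, and Q ∩ N(p) followed by Q \ N(p) if Q is before p's class), the result is again consistent with a linear extension. -/

import Mathlib

/-- `d` is a transitive orientation of the subgraph of `G` induced on `S`:
each edge of `G[S]` gets exactly one direction, and directions compose transitively. -/
def IsTransOrientationOn {V : Type*} (G : SimpleGraph V) (S : Set V)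
    (d : V → V → Prop) : Prop :=
  (∀ a b, d a b → G.Adj a b ∧ a ∈ S ∧ b ∈ S) ∧
  (∀ a b, G.Adj a b → a ∈ S → b ∈ S → d a b ∨ d b a) ∧
  (∀ a b, d a b → ¬ d b a) ∧
  (∀ a b c, d a b → d b c → d a c)

/-- `M` is a module of `G`: every vertex outside `M` is adjacent to all of `M` or to
none of `M`. -/
def IsModule {V : Type*} (G : SimpleGraph V) (M : Set V) : Prop :=
  ∀ v ∉ M, (∀ m ∈ M, G.Adj v m) ∨ (∀ m ∈ M, ¬ G.Adj v m)

/-- `G` is prime: it has no non-trivial module. -/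
def IsPrimeGraph {V : Type*} (G : SimpleGraph V) : Prop :=
  ∀ M : Set V, IsModule G M → M.Subsingleton ∨ M = Set.univ

/-- `C` is a connected component of the subgraph of `G` induced on `S`. -/
def IsComponentOn {V : Type*} (G : SimpleGraph V) (S C : Set V) : Prop :=
  C ⊆ S ∧ C.Nonempty ∧
  (∀ a ∈ C, ∀ b ∈ C, Relation.ReflTransGen (fun p q => p ∈ S ∧ q ∈ S ∧ G.Adj p q) a b) ∧
  (∀ a ∈ C, ∀ b ∈ S, G.Adj a b → b ∈ C)

/-- `C` is a co-component of `G[S]`: a connected component of the complement of the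
subgraph of `G` induced on `S`. -/
def IsCoComponentOn {V : Type*} (G : SimpleGraph V) (S C : Set V) : Prop :=
  C ⊆ S ∧ C.Nonempty ∧
  (∀ a ∈ C, ∀ b ∈ C,
    Relation.ReflTransGen (fun p q => p ∈ S ∧ q ∈ S ∧ p ≠ q ∧ ¬ G.Adj p q) a b) ∧
  (∀ a ∈ C, ∀ b ∈ S, a ≠ b → ¬ G.Adj a b → b ∈ C)
/-- `r` is a linear extension of the transitive orientation `d` of `G`: a strict total
order on the vertices such that each edge `ab` is directed toward `b` iff `a` precedes `b`. -/
def IsLinearExtension {V : Type*} (G : SimpleGraph V) (d r : V → V → Prop) : Prop :=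
  (∀ a b c, r a b → r b c → r a c) ∧ (∀ a, ¬ r a a) ∧
  (∀ a b, a ≠ b → r a b ∨ r b a) ∧
  (∀ a b, G.Adj a b → (d a b ↔ r a b))

/-- The ordered partition (list of classes) `L` is consistent with a linear extension of
the orientation `d`: some linear extension puts every vertex of an earlier class before
every vertex of a later class. -/
def ConsistentLE {V : Type*} (G : SimpleGraph V) (d : V → V → Prop)
    (L : List (Set V)) : Prop :=
  ∃ r : V → V → Prop, IsLinearExtension G d r ∧
    ∀ i j, i < j → j < L.length → ∀ a ∈ L.getD i ∅, ∀ b ∈ L.getD j ∅, r a b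

open Classical in
/-- The pivot refinement on pivot `p`, whose class is at position `ip` in `L`: every
class `Q` at a position `j ≠ ip` that is split by `N(p)` is replaced by `Q \ N(p)`
followed by `Q ∩ N(p)` if `Q` comes after `p`'s class, and by `Q ∩ N(p)` followed by
`Q \ N(p)` if it comes before. -/
noncomputable def pivotRefine {V : Type*} (G : SimpleGraph V) (p : V)
    (L : List (Set V)) (ip : ℕ) : List (Set V) :=
  ((L.zipIdx.map Prod.swap).map (fun jQ =>
    if jQ.1 = ip then [jQ.2]
    else if (jQ.2 ∩ G.neighborSet p).Nonempty ∧ (jQ.2 \ G.neighborSet p).Nonempty then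
      (if ip < jQ.1 then [jQ.2 \ G.neighborSet p, jQ.2 ∩ G.neighborSet p]
       else [jQ.2 ∩ G.neighborSet p, jQ.2 \ G.neighborSet p])
    else [jQ.2])).flatten

section Aux

variable {V : Type*}

/-- Decomposition of an index into a flattened list. -/
lemma flatten_decomp {α : Type*} (M : List (List α)) (i : ℕ) (h : i < M.flatten.length) :
    ∃ k r, ∃ hk : k < M.length, ∃ hr : r < (M[k]'hk).length,
      i = ((M.take k).map List.length).sum + r ∧ M.flatten[i] = (M[k]'hk)[r]'hr := by
  induction M generalizing i with
  | nil => simp at h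
  | cons t M ih =>
    rw [List.flatten_cons] at h
    by_cases hi : i < t.length
    · refine ⟨0, i, by simp, by simpa using hi, by simp, ?_⟩
      simp [List.flatten_cons, List.getElem_append_left hi]
    · push_neg at hi
      have h' : i - t.length < M.flatten.length := by
        rw [List.length_append] at h; omega
      obtain ⟨k, r, hk, hr, heq, hval⟩ := ih _ h'
      refine ⟨k + 1, r, by simpa using Nat.succ_lt_succ hk, by simpa using hr, ?_, ?_⟩
      · simp only [List.take_succ_cons, List.map_cons, List.sum_cons]; omega
      · simp only [List.flatten_cons]
        rw [List.getElem_append_right hi]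
        simpa using hval

lemma offset_mono {α : Type*} (M : List (List α)) {k1 r1 k2 r2 : ℕ}
    (hk1 : k1 < M.length) (hk2 : k2 < M.length)
    (hr1 : r1 < (M[k1]'hk1).length) (hr2 : r2 < (M[k2]'hk2).length)
    (h : ((M.take k1).map List.length).sum + r1 < ((M.take k2).map List.length).sum + r2) :
    k1 < k2 ∨ (k1 = k2 ∧ r1 < r2) := by
  set N : List ℕ := M.map List.length with hN
  have hlen : N.length = M.length := by simp [hN]
  have htk : ∀ k, (M.take k).map List.length = N.take k := by
    intro k; simp [hN, List.map_take]
  rw [htk, htk] at h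
  have hsucc : ∀ k (hk : k < M.length), (N.take (k+1)).sum = (N.take k).sum + (M[k]'hk).length := by
    intro k hk
    have := List.sum_take_succ N k (by omega)
    simpa [hN] using this
  have hmono : ∀ a b, a ≤ b → (N.take a).sum ≤ (N.take b).sum := by
    intro a b hab
    have h2 := List.take_add (l := N) (i := a) (j := b - a)
    rw [show a + (b - a) = b from by omega] at h2
    rw [h2, List.sum_append]; omega
  by_contra hc
  push_neg at hc
  rcases Nat.lt_or_ge k2 k1 with hlt | hge
  · have ha : (N.take k2).sum + r2 < (N.take (k2+1)).sum := by
      rw [hsucc k2 hk2]; omega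
    have hb : (N.take (k2+1)).sum ≤ (N.take k1).sum := hmono _ _ (by omega)
    omega
  · have : k1 = k2 := by omega
    subst this
    have := hc.2 rfl
    omega

/-- Any strict partial order `D` extending `d` can be completed to a linear extension. -/
lemma exists_linear_ext (G : SimpleGraph V) (d : V → V → Prop)
    (hd : IsTransOrientationOn G Set.univ d)
    (D : V → V → Prop)
    (hDd : ∀ a b, d a b → D a b)
    (hDt : ∀ a b c, D a b → D b c → D a c)
    (hDi : ∀ a, ¬ D a a) :
    ∃ r, IsLinearExtension G d r ∧ ∀ a b, D a b → r a b := by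
  obtain ⟨h1, h2, h3, _h4⟩ := hd
  let R : V → V → Prop := fun u v => D u v ∨ u = v
  have hpo : IsPartialOrder V R :=
    { refl := fun a => Or.inr rfl
      trans := by
        intro a b c hab hbc
        rcases hab with hab | rfl
        · rcases hbc with hbc | rfl
          · exact Or.inl (hDt _ _ _ hab hbc)
          · exact Or.inl hab
        · exact hbc
      antisymm := by
        intro a b hab hba
        rcases hab with hab | rfl
        · rcases hba with hba | rfl
          · exact absurd (hDt _ _ _ hab hba) (hDi a)
          · rfl
        · rfl }
  obtain ⟨s, hs, hRs⟩ := @extend_partialOrder V R hpo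
  have stot : ∀ a b, s a b ∨ s b a := fun a b => hs.2.1 a b
  have strans : ∀ a b c, s a b → s b c → s a c := fun a b c h h' => hs.1.1.2.1 a b c h h'
  have santi : ∀ a b, s a b → s b a → a = b := fun a b h h' => hs.1.2.1 a b h h'
  have hDr : ∀ a b, D a b → s a b ∧ a ≠ b := by
    intro a b h
    refine ⟨hRs a b (Or.inl h), ?_⟩
    rintro rfl; exact hDi a h
  refine ⟨fun u v => s u v ∧ u ≠ v, ⟨?_, ?_, ?_, ?_⟩, hDr⟩
  · rintro a b c ⟨hab, hne⟩ ⟨hbc, hne'⟩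
    refine ⟨strans _ _ _ hab hbc, ?_⟩
    rintro rfl
    exact hne' (santi _ _ hbc hab)
  · rintro a ⟨_, hne⟩; exact hne rfl
  · intro a b hne
    rcases stot a b with h | h
    · exact Or.inl ⟨h, hne⟩
    · exact Or.inr ⟨h, fun e => hne e.symm⟩
  · intro a b hadj
    constructor
    · intro hdab; exact hDr a b (hDd a b hdab)
    · rintro ⟨hsab, hne⟩
      rcases h2 a b hadj trivial trivial with h | h
      · exact h
      · exfalso
        have := (hDr b a (hDd b a h)).1
        exact hne (santi _ _ hsab this)

end Aux

/-- for a prime comparability graph with transitive orientation `d` and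
source vertex `x`, the ordered partition `({x}, V ∖ {x})` is consistent with a linear
extension, and the pivot refinement preserves consistency with a linear extension. -/
theorem pivot_preserves_consistency {V : Type*} (G : SimpleGraph V)
    (hp : IsPrimeGraph G)
    (d : V → V → Prop) (hd : IsTransOrientationOn G Set.univ d)
    (x : V) (hx : ∀ b, G.Adj x b → d x b) :
    ConsistentLE G d [{x}, Set.univ \ {x}] ∧
    ∀ (L : List (Set V)) (p : V) (ip : ℕ),
      ConsistentLE G d L → ip < L.length → p ∈ L.getD ip ∅ →
      ConsistentLE G d (pivotRefine G p L ip) := by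
  obtain ⟨h1, h2, h3, h4⟩ := hd
  have hdirr : ∀ a, ¬ d a a := fun a h => h3 a a h h
  constructor
  · -- part 1
    have hnotx : ∀ u, ¬ d u x := by
      intro u h
      exact h3 u x h (hx u ((h1 u x h).1.symm))
    set D : V → V → Prop := fun u v => d u v ∨ (u = x ∧ v ≠ x) with hD
    obtain ⟨r, hr, hDr⟩ := exists_linear_ext G d ⟨h1, h2, h3, h4⟩ D
      (fun a b h => Or.inl h)
      (by
        rintro a b c (hab | ⟨rfl, hbx⟩) (hbc | ⟨rfl, hcx⟩)
        · exact Or.inl (h4 _ _ _ hab hbc)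
        · exact absurd hab (hnotx a)
        · right; exact ⟨rfl, fun e => hnotx b (e ▸ hbc)⟩
        · exact absurd rfl hbx)
      (by rintro a (h | ⟨rfl, hne⟩); exacts [hdirr a h, hne rfl])
    refine ⟨r, hr, ?_⟩
    intro i j hij hj a ha b hb
    have hj2 : j < 2 := by simpa using hj
    have hj1 : j = 1 := by omega
    have hi0 : i = 0 := by omega
    subst hj1; subst hi0
    simp only [List.getD_cons_zero] at ha
    simp only [List.getD_cons_succ, List.getD_cons_zero] at hb
    have ha' : a = x := ha
    subst ha'
    exact hDr _ _ (Or.inr ⟨rfl, hb.2⟩)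
  · -- part 2
    intro L p ip hcons hip hpmem
    classical
    obtain ⟨r, hr, hLr⟩ := hcons
    obtain ⟨rtrans, rirr, rtot, redge⟩ := hr
    set NB := G.neighborSet p with hNB
    set f : ℕ × Set V → List (Set V) := fun jQ =>
      if jQ.1 = ip then [jQ.2]
      else if (jQ.2 ∩ NB).Nonempty ∧ (jQ.2 \ NB).Nonempty then
        (if ip < jQ.1 then [jQ.2 \ NB, jQ.2 ∩ NB]
         else [jQ.2 ∩ NB, jQ.2 \ NB])
      else [jQ.2] with hf
    set M : List (List (Set V)) := (L.zipIdx.map Prod.swap).map f with hM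
    have hML : M.length = L.length := by simp [hM]
    have hL' : pivotRefine G p L ip = M.flatten := by
      simp only [pivotRefine, hM, hf, hNB]
    have hMk : ∀ k (hk : k < L.length), M[k]'(by omega) = f (k, L[k]'hk) := by
      intro k hk
      simp [hM, List.getElem_zipIdx]
    have hMk2 : ∀ k (hk : k < L.length),
        M[k]'(by omega) = [L[k]'hk] ∨
        (ip < k ∧ M[k]'(by omega) = [(L[k]'hk) \ NB, (L[k]'hk) ∩ NB]) ∨
        (k < ip ∧ M[k]'(by omega) = [(L[k]'hk) ∩ NB, (L[k]'hk) \ NB]) := by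
      intro k hk
      rw [hMk k hk]
      simp only [hf]
      split
      · exact Or.inl rfl
      · rename_i hkip
        split
        · split
          · rename_i hlt
            exact Or.inr (Or.inl ⟨hlt, rfl⟩)
          · rename_i hlt
            refine Or.inr (Or.inr ⟨?_, rfl⟩)
            omega
        · exact Or.inl rfl
    -- every piece is a subset of its original class
    have hsub : ∀ k (hk : k < L.length) s, s ∈ M[k]'(by omega) → s ⊆ L[k]'hk := by
      intro k hk s hs
      rcases hMk2 k hk with he | ⟨_, he⟩ | ⟨_, he⟩ <;> rw [he] at hs <;> simp at hs
      · subst hs; exact fun a ha => ha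
      · rcases hs with rfl | rfl
        · exact fun a ha => ha.1
        · exact fun a ha => ha.1
      · rcases hs with rfl | rfl
        · exact fun a ha => ha.1
        · exact fun a ha => ha.1
    set L' : List (Set V) := M.flatten with hL'def
    have hblk : ∀ i a, i < L'.length → a ∈ L'.getD i ∅ →
        ∃ k rr, ∃ hk : k < L.length, ∃ hrr : rr < (M[k]'(by omega)).length,
          i = ((M.take k).map List.length).sum + rr ∧
          a ∈ (M[k]'(by omega))[rr]'hrr := by
      intro i a hi ha
      rw [List.getD_eq_getElem L' ∅ hi] at ha
      obtain ⟨k, rr, hk, hrr, heq, hval⟩ := flatten_decomp M i hi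
      exact ⟨k, rr, by omega, hrr, heq, hval ▸ ha⟩
    have hgetD : ∀ k (hk : k < L.length), L.getD k ∅ = L[k]'hk := fun k hk =>
      List.getD_eq_getElem L ∅ hk
    -- key: no backward d-edge between blocks
    have hback : ∀ i j a b, i < j → j < L'.length →
        a ∈ L'.getD i ∅ → b ∈ L'.getD j ∅ → ¬ d b a := by
      intro i j a b hij hj ha hb hdba
      obtain ⟨k1, r1, hk1, hr1, he1, hv1⟩ := hblk i a (by omega) ha
      obtain ⟨k2, r2, hk2, hr2, he2, hv2⟩ := hblk j b hj hb
      have haL : a ∈ L[k1]'hk1 := hsub k1 hk1 _ (List.getElem_mem hr1) hv1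
      have hbL : b ∈ L[k2]'hk2 := hsub k2 hk2 _ (List.getElem_mem hr2) hv2
      have hmono := offset_mono M (k1 := k1) (k2 := k2) (by omega) (by omega) hr1 hr2
        (by rw [← he1, ← he2]; exact hij)
      rcases hmono with hlt | ⟨heq, hrlt⟩
      · -- different classes: consistency of r
        have hrab : r a b := hLr k1 k2 hlt hk2 a (by rw [hgetD k1 hk1]; exact haL)
          b (by rw [hgetD k2 hk2]; exact hbL)
        have : r b a := (redge b a (h1 b a hdba).1).1 hdba
        exact rirr a (rtrans a b a hrab this)
      · -- same class, split
        subst heq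
        rcases hMk2 k1 hk1 with he | ⟨hlt, hMeq⟩ | ⟨hlt, hMeq⟩
        · rw [he] at hr2; simp at hr2; omega
        · -- ip < k1 : piece 0 = Q \ N, piece 1 = Q ∩ N
          have hlen2 : (M[k1]'(by omega)).length = 2 := by rw [hMeq]; rfl
          have hr1' : r1 = 0 := by omega
          have hr2' : r2 = 1 := by omega
          subst hr1'; subst hr2'
          rw [List.getElem_of_eq hMeq] at hv1 hv2
          simp only [List.getElem_cons_zero, List.getElem_cons_succ] at hv1 hv2
          have hadjpb : G.Adj p b := hv2.2
          have hrpb : r p b := hLr ip k1 hlt hk1 p hpmem b (by rw [hgetD k1 hk1]; exact hv2.1)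
          have hdpb : d p b := (redge p b hadjpb).2 hrpb
          have hdpa : d p a := h4 p b a hdpb hdba
          exact hv1.2 ((h1 p a hdpa).1)
        · -- k1 < ip : piece 0 = Q ∩ N, piece 1 = Q \ N
          have hlen2 : (M[k1]'(by omega)).length = 2 := by rw [hMeq]; rfl
          have hr1' : r1 = 0 := by omega
          have hr2' : r2 = 1 := by omega
          subst hr1'; subst hr2'
          rw [List.getElem_of_eq hMeq] at hv1 hv2
          simp only [List.getElem_cons_zero, List.getElem_cons_succ] at hv1 hv2
          have hadjap : G.Adj a p := (hv1.2 : G.Adj p a).symm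
          have hrap : r a p := hLr k1 ip hlt hip a (by rw [hgetD k1 hk1]; exact hv1.1) p hpmem
          have hdap : d a p := (redge a p hadjap).2 hrap
          have hdbp : d b p := h4 b a p hdba hdap
          exact hv2.2 ((h1 b p hdbp).1.symm)
    -- disjointness of blocks
    have hdisj' : ∀ i j a, i < j → j < L'.length →
        a ∈ L'.getD i ∅ → a ∈ L'.getD j ∅ → False := by
      intro i j a hij hj ha ha'
      obtain ⟨k1, r1, hk1, hr1, he1, hv1⟩ := hblk i a (by omega) ha
      obtain ⟨k2, r2, hk2, hr2, he2, hv2⟩ := hblk j a hj ha'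
      have haL : a ∈ L[k1]'hk1 := hsub k1 hk1 _ (List.getElem_mem hr1) hv1
      have hbL : a ∈ L[k2]'hk2 := hsub k2 hk2 _ (List.getElem_mem hr2) hv2
      have hmono := offset_mono M (k1 := k1) (k2 := k2) (by omega) (by omega) hr1 hr2
        (by rw [← he1, ← he2]; exact hij)
      rcases hmono with hlt | ⟨heq, hrlt⟩
      · have hraa : r a a := hLr k1 k2 hlt hk2 a (by rw [hgetD k1 hk1]; exact haL)
          a (by rw [hgetD k2 hk2]; exact hbL)
        exact rirr a hraa
      · subst heq
        rcases hMk2 k1 hk1 with he | ⟨hlt, hMeq⟩ | ⟨hlt, hMeq⟩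
        · rw [he] at hr2; simp at hr2; omega
        · have hlen2 : (M[k1]'(by omega)).length = 2 := by rw [hMeq]; rfl
          have hr1' : r1 = 0 := by omega
          have hr2' : r2 = 1 := by omega
          subst hr1'; subst hr2'
          rw [List.getElem_of_eq hMeq] at hv1 hv2
          simp only [List.getElem_cons_zero, List.getElem_cons_succ] at hv1 hv2
          exact hv1.2 hv2.2
        · have hlen2 : (M[k1]'(by omega)).length = 2 := by rw [hMeq]; rfl
          have hr1' : r1 = 0 := by omega
          have hr2' : r2 = 1 := by omega
          subst hr1'; subst hr2'
          rw [List.getElem_of_eq hMeq] at hv1 hv2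
          simp only [List.getElem_cons_zero, List.getElem_cons_succ] at hv1 hv2
          exact hv2.2 hv1.2
    set Blk : ℕ → V → Prop := fun i a => i < L'.length ∧ a ∈ L'.getD i ∅ with hBlk
    have hdisj : ∀ i j a, Blk i a → Blk j a → i = j := by
      intro i j a hi hj
      by_contra hne
      rcases Nat.lt_or_ge i j with h | h
      · exact hdisj' i j a h hj.1 hi.2 hj.2
      · exact hdisj' j i a (by omega) hi.1 hj.2 hi.2
    have hback' : ∀ i j a b, i < j → Blk i a → Blk j b → ¬ d b a := by
      intro i j a b hij hi hj
      exact hback i j a b hij hj.1 hi.2 hj.2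
    set B : V → V → Prop := fun a b => ∃ i j, i < j ∧ Blk i a ∧ Blk j b with hB
    set S : V → V → Prop := fun u v => d u v ∨ B u v with hS
    set J : V → V → Prop := fun u v => d u v ∨
      ∃ i j a b, i < j ∧ Blk i a ∧ Blk j b ∧ (u = a ∨ d u a) ∧ (b = v ∨ d b v) with hJdef
    have hJ : ∀ u v, Relation.TransGen S u v → J u v := by
      intro u v h
      induction h with
      | single h =>
        rcases h with h | ⟨i, j, hij, hA, hB'⟩
        · exact Or.inl h
        · exact Or.inr ⟨i, j, _, _, hij, hA, hB', Or.inl rfl, Or.inl rfl⟩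
      | @tail v w hT step ih =>
        rcases step with hd' | ⟨k, l, hkl, hkv, hlw⟩
        · rcases ih with h | ⟨i, j, a, b, hij, hA, hB', hpre, hsuf⟩
          · exact Or.inl (h4 _ _ _ h hd')
          · refine Or.inr ⟨i, j, a, b, hij, hA, hB', hpre, Or.inr ?_⟩
            rcases hsuf with rfl | hsuf
            · exact hd'
            · exact h4 _ _ _ hsuf hd'
        · rcases ih with h | ⟨i, j, a, b, hij, hA, hB', hpre, hsuf⟩
          · exact Or.inr ⟨k, l, _, _, hkl, hkv, hlw, Or.inr h, Or.inl rfl⟩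
          · refine Or.inr ⟨i, l, a, w, ?_, hA, hlw, hpre, Or.inl rfl⟩
            rcases hsuf with rfl | hsuf
            · have : j = k := hdisj j k b hB' hkv
              omega
            · have hjk : ¬ k < j := by
                intro hlt
                exact hback' k j v b hlt hkv hB' hsuf
              omega
    have hirr : ∀ u, ¬ Relation.TransGen S u u := by
      intro u h
      rcases hJ u u h with h' | ⟨i, j, a, b, hij, hA, hB', hpre, hsuf⟩
      · exact hdirr u h'
      · have hdba : d b a ∨ a = b := by
          rcases hpre with h5 | h5
          · rcases hsuf with h6 | h6
            · right; rw [← h5, h6]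
            · left; rw [← h5]; exact h6
          · rcases hsuf with h6 | h6
            · left; rw [h6]; exact h5
            · left; exact h4 b u a h6 h5
        rcases hdba with h7 | h7
        · exact hback' i j a b hij hA hB' h7
        · exact absurd (hdisj i j a hA (by rw [h7]; exact hB')) (by omega)
    obtain ⟨r', hle, hDr'⟩ := exists_linear_ext G d ⟨h1, h2, h3, h4⟩
      (Relation.TransGen S)
      (fun a b h => Relation.TransGen.single (Or.inl h))
      (fun a b c hab hbc => Relation.TransGen.trans hab hbc)
      hirr
    refine ⟨r', hle, ?_⟩
    intro i j hij hj a ha b hb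
    rw [hL'] at hj ha hb
    exact hDr' a b (Relation.TransGen.single
      (Or.inr ⟨i, j, hij, ⟨by omega, ha⟩, ⟨hj, hb⟩⟩))
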